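/- A Lipschitz trajectory remaining in free balls is continuously collision free: let p : [t₀, t_N] → ℝⁿ be v̄-Lipschitz, with grid t_k = t₀ + k·Δt, and suppose ‖p(t_k) − c_k‖ ≤ d_O(c_k) − d̲ − v̄·Δt/2 for all k = 0,…,N. Then d_O(p(t)) ≥ d̲ for all t ∈ [t₀, t_N]. -/

import Mathlib

/-- A `v̄`-Lipschitz trajectory satisfying the inflated discrete
free-ball constraints on a grid with spacing `Δt` is continuously collision
free: `d_O(p(t)) ≥ d̲` on the whole interval. -/
theorem lipschitz_trajectory_collision_free {n : ℕ}
    (O : Set (EuclideanSpace ℝ (Fin n))) (hO : O.Nonempty)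
    (dmin Δt vbar : ℝ) (hdmin : 0 < dmin) (hΔt : 0 < Δt) (hvbar : 0 < vbar)
    (N : ℕ) (t0 : ℝ)
    (p : ℝ → EuclideanSpace ℝ (Fin n))
    (hlip : LipschitzWith (Real.toNNReal vbar) p)
    (c : ℕ → EuclideanSpace ℝ (Fin n))
    (hball : ∀ k ≤ N, ‖p (t0 + k * Δt) - c k‖ ≤
      Metric.infDist (c k) O - dmin - vbar * Δt / 2) :
    ∀ t ∈ Set.Icc t0 (t0 + N * Δt), dmin ≤ Metric.infDist (p t) O := by
  intro t ht
  obtain ⟨ht1, ht2⟩ := ht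
  set s : ℝ := (t - t0) / Δt with hs
  have hs0 : 0 ≤ s := div_nonneg (by linarith) hΔt.le
  have hsN : s ≤ N := by
    rw [hs, div_le_iff₀ hΔt]; linarith
  set k : ℕ := ⌊s + 1/2⌋₊ with hk
  have hk1 : (k : ℝ) ≤ s + 1/2 := Nat.floor_le (by linarith)
  have hk2 : s + 1/2 < k + 1 := Nat.lt_floor_add_one _
  have hkN : k ≤ N := by
    have h : (k : ℝ) < (N : ℝ) + 1 := by linarith
    have : k < N + 1 := by exact_mod_cast h
    omega
  have htk : |t - (t0 + k * Δt)| ≤ Δt / 2 := by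
    have hts : t = t0 + s * Δt := by rw [hs, div_mul_cancel₀ _ hΔt.ne']; ring
    rw [abs_le]
    constructor <;> nlinarith [hk1, hk2]
  have hdist : dist (p t) (p (t0 + k * Δt)) ≤ vbar * Δt / 2 := by
    have := hlip.dist_le_mul t (t0 + k * Δt)
    have hcoe : (Real.toNNReal vbar : ℝ) = vbar := Real.coe_toNNReal _ hvbar.le
    rw [hcoe] at this
    calc dist (p t) (p (t0 + k * Δt)) ≤ vbar * dist t (t0 + k * Δt) := this
      _ ≤ vbar * (Δt / 2) := by
          apply mul_le_mul_of_nonneg_left _ hvbar.le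
          rwa [Real.dist_eq]
      _ = vbar * Δt / 2 := by ring
  have hb := hball k hkN
  have h1 : Metric.infDist (c k) O ≤ Metric.infDist (p t) O + dist (c k) (p t) :=
    Metric.infDist_le_infDist_add_dist
  rw [← dist_eq_norm] at hb
  have h2 : dist (c k) (p t) ≤ dist (p t) (p (t0 + k * Δt)) + dist (p (t0 + k * Δt)) (c k) := by
    rw [dist_comm]; exact dist_triangle _ _ _
  linarith
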